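/- Let C_q > 0 and let q₁, q₂ : (0,∞) → ℂ be differentiable with |q₁(t)| ≤ C_q and |q₂(t)| ≤ C_q for all t. Set ν = min(1, 2Re μ). There exists a constant C > 0, depending only on μ and C_q, such that for every λ ∈ ℂ \ {0} and every real t ≥ 2|μ|/|λ|, the matrix Q(t,λ) is invertible and |L(t,λ)| ≤ (2/|λ|)·|Q′(t)| + C·(1/|λ| + t^{−ν}/|λ|^ν)·|Q(t)|. -/

import Mathlib

open Complex Matrix Set

attribute [local instance] Matrix.linftyOpNormedRing Matrix.linftyOpNormedAlgebra

noncomputable def Bmat : Matrix (Fin 2) (Fin 2) ℂ := !![0, 1; -1, 0]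
noncomputable def Jmat : Matrix (Fin 2) (Fin 2) ℂ := !![0, 1; 1, 0]
noncomputable def Kmat : Matrix (Fin 2) (Fin 2) ℂ := !![1, 0; 0, -1]

/-- `Q(t) = q₁(t) K + q₂(t) J`. -/
noncomputable def Qm (q₁ q₂ : ℝ → ℂ) (t : ℝ) : Matrix (Fin 2) (Fin 2) ℂ :=
  q₁ t • Kmat + q₂ t • Jmat

/-- `Q(t,λ) = (μ/t) J − λ I`. -/
noncomputable def Qlam (μ : ℂ) (t : ℝ) (lam : ℂ) : Matrix (Fin 2) (Fin 2) ℂ :=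
  (μ / (t : ℂ)) • Jmat - lam • (1 : Matrix (Fin 2) (Fin 2) ℂ)

/-- `L(t,λ) = (d/dt)(Q(t,λ)⁻¹ Q(t)) + Q(t,λ)⁻¹ (Q B Q + Q B Q_λ + Q_λ B Q)`. -/
noncomputable def Lm (μ : ℂ) (q₁ q₂ : ℝ → ℂ) (t : ℝ) (lam : ℂ) :
    Matrix (Fin 2) (Fin 2) ℂ :=
  deriv (fun s : ℝ => (Qlam μ s lam)⁻¹ * Qm q₁ q₂ s) t +
    (Qlam μ t lam)⁻¹ *
      (Qm q₁ q₂ t * Bmat * Qm q₁ q₂ t + Qm q₁ q₂ t * Bmat * Qlam μ t lam +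
        Qlam μ t lam * Bmat * Qm q₁ q₂ t)

lemma norm_fin2 (A : Matrix (Fin 2) (Fin 2) ℂ) :
    ‖A‖ = max (‖A 0 0‖ + ‖A 0 1‖) (‖A 1 0‖ + ‖A 1 1‖) := by
  rw [Matrix.linfty_opNorm_def]
  rw [show (Finset.univ : Finset (Fin 2)) = {0, 1} from rfl]
  rw [Finset.sup_insert, Finset.sup_singleton]
  simp [Fin.sum_univ_two, NNReal.coe_max, norm_toNNReal]

lemma norm_Jmat : ‖Jmat‖ = 1 := by simp [norm_fin2, Jmat]
lemma norm_Kmat : ‖Kmat‖ = 1 := by simp [norm_fin2, Kmat]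
lemma norm_Bmat : ‖Bmat‖ = 1 := by simp [norm_fin2, Bmat]

lemma aJl (a lam : ℂ) :
    a • Jmat + lam • (1 : Matrix (Fin 2) (Fin 2) ℂ) = !![lam, a; a, lam] := by
  ext i j; fin_cases i <;> fin_cases j <;> simp [Jmat, Matrix.one_apply]

lemma aJml (a lam : ℂ) :
    a • Jmat - lam • (1 : Matrix (Fin 2) (Fin 2) ℂ) = !![-lam, a; a, -lam] := by
  ext i j; fin_cases i <;> fin_cases j <;> simp [Jmat, Matrix.one_apply]

lemma norm_aJl (a lam : ℂ) :
    ‖a • Jmat + lam • (1 : Matrix (Fin 2) (Fin 2) ℂ)‖ = ‖a‖ + ‖lam‖ := by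
  rw [aJl, norm_fin2]; simp; linarith

lemma Qlam_explicit (μ : ℂ) (t : ℝ) (lam : ℂ) :
    Qlam μ t lam = !![-lam, μ/(t:ℂ); μ/(t:ℂ), -lam] := aJml _ _

lemma Qm_explicit (q₁ q₂ : ℝ → ℂ) (t : ℝ) :
    Qm q₁ q₂ t = !![q₁ t, q₂ t; q₂ t, -(q₁ t)] := by
  ext i j; fin_cases i <;> fin_cases j <;> simp [Qm, Jmat, Kmat]

lemma norm_Qm (q₁ q₂ : ℝ → ℂ) (t : ℝ) : ‖Qm q₁ q₂ t‖ = ‖q₁ t‖ + ‖q₂ t‖ := by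
  rw [Qm_explicit, norm_fin2]; simp; linarith

lemma mul_inv_gen (a lam : ℂ) (hD : a^2 - lam^2 ≠ 0) :
    (!![-lam, a; a, -lam] : Matrix (Fin 2) (Fin 2) ℂ) *
      ((a^2 - lam^2)⁻¹ • !![lam, a; a, lam]) = 1 := by
  ext i j
  fin_cases i <;> fin_cases j <;>
    simp [Matrix.mul_apply, Fin.sum_univ_two, Matrix.one_apply] <;>
    field_simp <;> ring

lemma Qlam_inv (μ : ℂ) (t : ℝ) (lam : ℂ) (hD : (μ/(t:ℂ))^2 - lam^2 ≠ 0) :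
    (Qlam μ t lam)⁻¹ = ((μ/(t:ℂ))^2 - lam^2)⁻¹ •
      ((μ/(t:ℂ)) • Jmat + lam • (1 : Matrix (Fin 2) (Fin 2) ℂ)) := by
  rw [Qlam_explicit, aJl]
  exact Matrix.inv_eq_right_inv (mul_inv_gen _ _ hD)

lemma Qlam_isUnit (μ : ℂ) (t : ℝ) (lam : ℂ) (hD : (μ/(t:ℂ))^2 - lam^2 ≠ 0) :
    IsUnit (Qlam μ t lam) := by
  rw [Matrix.isUnit_iff_isUnit_det, isUnit_iff_ne_zero]
  rw [Qlam_explicit, Matrix.det_fin_two_of]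
  intro h; apply hD
  rw [← sub_eq_zero] at h ⊢
  rw [← neg_eq_zero] at h
  convert h using 1; ring

lemma key_identity (a lam q1 q2 : ℂ) :
    (!![lam, a; a, lam] : Matrix (Fin 2) (Fin 2) ℂ) *
      (!![q1, q2; q2, -q1] * Bmat * !![q1, q2; q2, -q1] +
       !![q1, q2; q2, -q1] * Bmat * !![-lam, a; a, -lam] +
       !![-lam, a; a, -lam] * Bmat * !![q1, q2; q2, -q1])
    = -((q1^2 + q2^2 + 2*a*q2) •
        ((!![lam, a; a, lam] : Matrix (Fin 2) (Fin 2) ℂ) * Bmat)) := by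
  ext i j
  fin_cases i <;> fin_cases j <;>
    simp [Bmat, Matrix.mul_apply, Fin.sum_univ_two] <;> ring

set_option maxHeartbeats 1600000 in
theorem stmt11 (μ : ℂ) (hμ : 0 < μ.re) (Cq : ℝ) (hCq : 0 < Cq)
    (q₁ q₂ : ℝ → ℂ)
    (hdiff : ∀ t : ℝ, 0 < t → DifferentiableAt ℝ q₁ t ∧ DifferentiableAt ℝ q₂ t)
    (hbdd : ∀ t : ℝ, 0 < t → ‖q₁ t‖ ≤ Cq ∧ ‖q₂ t‖ ≤ Cq) :
    ∃ C : ℝ, 0 < C ∧ ∀ lam : ℂ, lam ≠ 0 → ∀ t : ℝ, 2 * ‖μ‖ / ‖lam‖ ≤ t →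
      IsUnit (Qlam μ t lam) ∧
      ‖Lm μ q₁ q₂ t lam‖ ≤
        (2 / ‖lam‖) * ‖deriv q₁ t • Kmat + deriv q₂ t • Jmat‖ +
          C * (1 / ‖lam‖ + t ^ (-(min 1 (2 * μ.re))) / ‖lam‖ ^ (min 1 (2 * μ.re))) *
            ‖Qm q₁ q₂ t‖ := by
  have hμ0 : μ ≠ 0 := by
    intro h; rw [h] at hμ; simp at hμ
  have hnm : (0:ℝ) < ‖μ‖ := norm_pos_iff.mpr hμ0
  set ν : ℝ := min 1 (2 * μ.re) with hν
  have hν0 : (0:ℝ) < ν := lt_min one_pos (by linarith)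
  have hν1 : ν ≤ 1 := min_le_left _ _
  set C : ℝ := max (2*Cq) ((2 + 4*‖μ‖) * (2*‖μ‖) ^ (ν - 1)) with hC
  have hCpos : 0 < C := lt_max_of_lt_left (by linarith)
  refine ⟨C, hCpos, ?_⟩
  intro lam hlam t ht
  have hnl : (0:ℝ) < ‖lam‖ := norm_pos_iff.mpr hlam
  have ht0 : (0:ℝ) < t := lt_of_lt_of_le (by positivity) ht
  have hnl' : ‖lam‖ ≠ 0 := ne_of_gt hnl
  have ht0' : t ≠ 0 := ne_of_gt ht0
  have habs : ‖lam‖ ≠ 0 := hnl'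
  have htne : (t:ℂ) ≠ 0 := by
    simpa using ne_of_gt ht0
  have htl : 2*‖μ‖ ≤ t * ‖lam‖ := by
    rw [div_le_iff₀ hnl] at ht; linarith
  -- a and its bounds
  have hna : ‖μ / (t:ℂ)‖ = ‖μ‖ / t := by
    rw [norm_div, Complex.norm_real, Real.norm_eq_abs, abs_of_pos ht0]
  have hna_le : ‖μ / (t:ℂ)‖ ≤ ‖lam‖ / 2 := by
    rw [hna, div_le_div_iff₀ ht0 two_pos]; linarith
  have hna0 : (0:ℝ) ≤ ‖μ / (t:ℂ)‖ := norm_nonneg _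
  -- D and its bounds
  set D : ℂ := (μ/(t:ℂ))^2 - lam^2 with hDdef
  have hDlow : 3/4 * ‖lam‖^2 ≤ ‖D‖ := by
    have h1 : ‖(μ/(t:ℂ))^2‖ ≤ ‖lam‖^2/4 := by
      rw [norm_pow]; nlinarith [hna_le, hna0]
    have h2 : ‖lam^2‖ - ‖(μ/(t:ℂ))^2‖ ≤ ‖D‖ := by
      rw [hDdef, norm_sub_rev]; exact norm_sub_norm_le _ _
    rw [norm_pow] at h2
    nlinarith
  have hD0 : (0:ℝ) < ‖D‖ := lt_of_lt_of_le (by positivity) hDlow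
  have hDne : D ≠ 0 := by
    intro h; rw [h] at hD0; simp at hD0
  have hDinv : ‖D⁻¹‖ ≤ 4/(3*‖lam‖^2) := by
    rw [norm_inv]
    calc ‖D‖⁻¹ ≤ (3/4 * ‖lam‖^2)⁻¹ :=
          inv_anti₀ (by positivity) hDlow
      _ = 4/(3*‖lam‖^2) := by field_simp
  refine ⟨Qlam_isUnit μ t lam hDne, ?_⟩
  -- derivative computations
  have hat : HasDerivAt (fun s : ℝ => μ / (s:ℂ)) (-(μ/(t:ℂ)^2)) t := by
    have h1 : HasDerivAt (fun s : ℝ => (s:ℂ)) 1 t := by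
      simpa using (hasDerivAt_id t).ofReal_comp
    have h2 := (hasDerivAt_const t μ).div h1 htne
    refine h2.congr_deriv ?_
    ring
  have hatD : HasDerivAt (fun s : ℝ => (μ/(s:ℂ))^2 - lam^2)
      (2 * (μ/(t:ℂ)) * (-(μ/(t:ℂ)^2))) t := by
    have h := (hat.mul hat).sub_const (lam^2)
    have heq : (fun s : ℝ => (μ/(s:ℂ)) * (μ/(s:ℂ)) - lam^2)
        = fun s : ℝ => (μ/(s:ℂ))^2 - lam^2 := by
      funext s; ring
    simp only [Pi.mul_apply] at h
    rw [heq] at h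
    refine h.congr_deriv ?_
    ring
  have hatDinv : HasDerivAt (fun s : ℝ => ((μ/(s:ℂ))^2 - lam^2)⁻¹)
      (-(2 * (μ/(t:ℂ)) * (-(μ/(t:ℂ)^2))) / D^2) t := by
    have h := (hasDerivAt_const t (1:ℂ)).div hatD hDne
    have heq : (fun s : ℝ => (1:ℂ) / ((μ/(s:ℂ))^2 - lam^2))
        = fun s : ℝ => ((μ/(s:ℂ))^2 - lam^2)⁻¹ := by
      funext s; rw [one_div]
    simp only [Pi.div_def] at h
    rw [heq] at h
    refine h.congr_deriv ?_
    rw [hDdef]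
    ring
  have hIn : HasDerivAt
      (fun s : ℝ => (μ/(s:ℂ)) • Jmat + lam • (1 : Matrix (Fin 2) (Fin 2) ℂ))
      ((-(μ/(t:ℂ)^2)) • Jmat) t := by
    exact (hat.smul_const Jmat).add_const (lam • (1 : Matrix (Fin 2) (Fin 2) ℂ))
  set G : ℝ → Matrix (Fin 2) (Fin 2) ℂ :=
    fun s => ((μ/(s:ℂ))^2 - lam^2)⁻¹ •
      ((μ/(s:ℂ)) • Jmat + lam • (1 : Matrix (Fin 2) (Fin 2) ℂ)) with hG
  set G' : Matrix (Fin 2) (Fin 2) ℂ :=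
    D⁻¹ • ((-(μ/(t:ℂ)^2)) • Jmat) +
      (-(2 * (μ/(t:ℂ)) * (-(μ/(t:ℂ)^2))) / D^2) •
        ((μ/(t:ℂ)) • Jmat + lam • (1 : Matrix (Fin 2) (Fin 2) ℂ)) with hG'
  have hGd : HasDerivAt G G' t := hatDinv.smul hIn
  set Q' : Matrix (Fin 2) (Fin 2) ℂ := deriv q₁ t • Kmat + deriv q₂ t • Jmat with hQ'
  have hQd : HasDerivAt (fun s => Qm q₁ q₂ s) Q' t := by
    have h1 := ((hdiff t ht0).1.hasDerivAt).smul_const Kmat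
    have h2 := ((hdiff t ht0).2.hasDerivAt).smul_const Jmat
    exact h1.add h2
  have hFd : HasDerivAt (fun s => G s * Qm q₁ q₂ s)
      (G' * Qm q₁ q₂ t + G t * Q') t := hGd.mul hQd
  -- eventual equality of the inverse with the explicit formula
  have hcont : ContinuousAt (fun s : ℝ => (μ/(s:ℂ))^2 - lam^2) t := by
    apply ContinuousAt.sub
    · exact (ContinuousAt.div continuousAt_const
        Complex.continuous_ofReal.continuousAt htne).pow 2
    · exact continuousAt_const
  have hev : ∀ᶠ s : ℝ in nhds t, ((μ/(s:ℂ))^2 - lam^2) ≠ 0 := hcont.eventually_ne hDne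
  have heq : (fun s : ℝ => (Qlam μ s lam)⁻¹ * Qm q₁ q₂ s) =ᶠ[nhds t]
      (fun s => G s * Qm q₁ q₂ s) := by
    filter_upwards [hev] with s hs
    rw [Qlam_inv μ s lam hs]
  have hderiv : deriv (fun s : ℝ => (Qlam μ s lam)⁻¹ * Qm q₁ q₂ s) t
      = G' * Qm q₁ q₂ t + G t * Q' :=
    (hFd.congr_of_eventuallyEq heq).deriv
  -- rewrite Lm
  set S : Matrix (Fin 2) (Fin 2) ℂ :=
    Qm q₁ q₂ t * Bmat * Qm q₁ q₂ t + Qm q₁ q₂ t * Bmat * Qlam μ t lam +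
      Qlam μ t lam * Bmat * Qm q₁ q₂ t with hS
  have hLm : Lm μ q₁ q₂ t lam = (G' * Qm q₁ q₂ t + G t * Q') + G t * S := by
    rw [Lm, hderiv, Qlam_inv μ t lam hDne]
  -- key identity for G t * S
  set β : ℂ := (q₁ t)^2 + (q₂ t)^2 + 2*(μ/(t:ℂ))*(q₂ t) with hβ
  have hGS : G t * S = D⁻¹ • (-(β • (((μ/(t:ℂ)) • Jmat +
      lam • (1 : Matrix (Fin 2) (Fin 2) ℂ)) * Bmat))) := by
    simp only [hG]
    rw [Matrix.smul_mul]
    congr 1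
    rw [hS, Qm_explicit, Qlam_explicit, aJl, hβ]
    exact key_identity (μ/(t:ℂ)) lam (q₁ t) (q₂ t)
  -- norm bounds
  have hnormT : ‖(μ/(t:ℂ)) • Jmat + lam • (1 : Matrix (Fin 2) (Fin 2) ℂ)‖
      = ‖μ/(t:ℂ)‖ + ‖lam‖ := norm_aJl _ _
  have hTle : ‖(μ/(t:ℂ)) • Jmat + lam • (1 : Matrix (Fin 2) (Fin 2) ℂ)‖
      ≤ 3/2 * ‖lam‖ := by rw [hnormT]; linarith
  have hGt_le : ‖G t‖ ≤ 2 / ‖lam‖ := by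
    simp only [hG]
    rw [norm_smul, norm_inv]
    calc ‖D‖⁻¹ * ‖(μ/(t:ℂ)) • Jmat + lam • (1 : Matrix (Fin 2) (Fin 2) ℂ)‖
        ≤ 4/(3*‖lam‖^2) * (3/2 * ‖lam‖) := by
          apply mul_le_mul (by rw [← norm_inv]; exact hDinv) hTle
            (norm_nonneg _) (by positivity)
      _ = 2 / ‖lam‖ := by field_simp; ring
  have hna' : ‖(-(μ/(t:ℂ)^2) : ℂ)‖ = ‖μ‖ / t^2 := by
    rw [norm_neg, norm_div, norm_pow, Complex.norm_real, Real.norm_eq_abs,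
      abs_of_pos ht0]
  have hna'_le : ‖(-(μ/(t:ℂ)^2) : ℂ)‖ ≤ ‖lam‖ / (2*t) := by
    rw [hna', div_le_div_iff₀ (by positivity) (by positivity)]
    nlinarith [mul_le_mul_of_nonneg_right htl ht0.le]
  have hG'_le : ‖G'‖ ≤ 2 / (t * ‖lam‖) := by
    have hb1 : ‖(-(2 * (μ/(t:ℂ)) * (-(μ/(t:ℂ)^2))) / D^2 : ℂ)‖
        ≤ 8/(9 * t * ‖lam‖^2) := by
      rw [norm_div, norm_neg, norm_mul, norm_mul, norm_pow]
      have hnum : ‖(2:ℂ)‖ * ‖μ/(t:ℂ)‖ * ‖(-(μ/(t:ℂ)^2) : ℂ)‖ ≤ ‖lam‖^2/(2*t) := by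
        rw [show ‖(2:ℂ)‖ = 2 by norm_num]
        rw [le_div_iff₀ (by positivity : (0:ℝ) < 2*t)]
        have hy : ‖(-(μ/(t:ℂ)^2) : ℂ)‖ * (2*t) ≤ ‖lam‖ := by
          rw [← le_div_iff₀ (by positivity : (0:ℝ) < 2*t)]
          exact hna'_le
        have h := mul_le_mul hna_le hy (by positivity) (by linarith)
        nlinarith [h]
      calc ‖(2:ℂ)‖ * ‖μ/(t:ℂ)‖ * ‖(-(μ/(t:ℂ)^2) : ℂ)‖ / ‖D‖^2
          ≤ (‖lam‖^2/(2*t)) / (9/16 * ‖lam‖^4) := by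
            apply div_le_div₀ (by positivity) hnum (by positivity)
            nlinarith [hDlow, hD0]
        _ = 8/(9 * t * ‖lam‖^2) := by field_simp; ring
    have ht1 : ‖(-(2 * (μ/(t:ℂ)) * (-(μ/(t:ℂ)^2))) / D^2) •
        ((μ/(t:ℂ)) • Jmat + lam • (1 : Matrix (Fin 2) (Fin 2) ℂ))‖
        ≤ 4/(3*(t*‖lam‖)) := by
      rw [norm_smul]
      calc _ ≤ 8/(9 * t * ‖lam‖^2) * (3/2 * ‖lam‖) :=
            mul_le_mul hb1 hTle (norm_nonneg _) (by positivity)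
        _ = 4/(3*(t*‖lam‖)) := by field_simp; ring
    have ht2 : ‖(D⁻¹ • ((-(μ/(t:ℂ)^2)) • Jmat) : Matrix (Fin 2) (Fin 2) ℂ)‖
        ≤ 2/(3*(t*‖lam‖)) := by
      rw [norm_smul, norm_smul, norm_Jmat, mul_one, norm_inv]
      calc ‖D‖⁻¹ * ‖(-(μ/(t:ℂ)^2) : ℂ)‖
          ≤ 4/(3*‖lam‖^2) * (‖lam‖/(2*t)) := by
            apply mul_le_mul (by rw [← norm_inv]; exact hDinv) hna'_le
              (norm_nonneg _) (by positivity)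
        _ = 2/(3*(t*‖lam‖)) := by field_simp; ring
    calc ‖G'‖ ≤ 2/(3*(t*‖lam‖)) + 4/(3*(t*‖lam‖)) :=
          le_trans (norm_add_le _ _) (add_le_add ht2 ht1)
      _ = 2 / (t * ‖lam‖) := by field_simp; ring
  -- bound on β
  have hq1 := (hbdd t ht0).1
  have hq2 := (hbdd t ht0).2
  have hβ_le : ‖β‖ ≤ (Cq + 2*‖μ‖/t) * (‖q₁ t‖ + ‖q₂ t‖) := by
    have h1 : ‖β‖ ≤ ‖(q₁ t)^2‖ + ‖(q₂ t)^2‖ + ‖2*(μ/(t:ℂ))*(q₂ t)‖ := by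
      rw [hβ]
      exact le_trans (norm_add_le _ _) (add_le_add (norm_add_le _ _) le_rfl)
    rw [norm_pow, norm_pow, norm_mul, norm_mul, show ‖(2:ℂ)‖ = 2 by norm_num, hna] at h1
    have hmt : (0:ℝ) ≤ ‖μ‖/t := by positivity
    have e1 : ‖q₁ t‖^2 ≤ Cq * ‖q₁ t‖ := by nlinarith [norm_nonneg (q₁ t), hq1]
    have e2 : ‖q₂ t‖^2 ≤ Cq * ‖q₂ t‖ := by nlinarith [norm_nonneg (q₂ t), hq2]
    have e3 : (0:ℝ) ≤ ‖μ‖/t * ‖q₁ t‖ := mul_nonneg hmt (norm_nonneg _)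
    have e4 : (Cq + 2*‖μ‖/t) * (‖q₁ t‖ + ‖q₂ t‖)
        = Cq*‖q₁ t‖ + Cq*‖q₂ t‖ + 2*(‖μ‖/t*‖q₁ t‖) + 2*(‖μ‖/t)*‖q₂ t‖ := by ring
    rw [e4]; linarith [h1, e1, e2, e3]
  have hGS_le : ‖G t * S‖ ≤ 2/‖lam‖ * ((Cq + 2*‖μ‖/t) * (‖q₁ t‖ + ‖q₂ t‖)) := by
    rw [hGS, norm_smul, norm_neg, norm_smul, norm_inv]
    have hTB : ‖((μ/(t:ℂ)) • Jmat + lam • (1 : Matrix (Fin 2) (Fin 2) ℂ)) * Bmat‖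
        ≤ 3/2 * ‖lam‖ := by
      calc _ ≤ ‖(μ/(t:ℂ)) • Jmat + lam • (1 : Matrix (Fin 2) (Fin 2) ℂ)‖ * ‖Bmat‖ :=
            norm_mul_le _ _
        _ = ‖(μ/(t:ℂ)) • Jmat + lam • (1 : Matrix (Fin 2) (Fin 2) ℂ)‖ := by
            rw [norm_Bmat, mul_one]
        _ ≤ 3/2 * ‖lam‖ := hTle
    calc ‖D‖⁻¹ * (‖β‖ * ‖((μ/(t:ℂ)) • Jmat + lam • (1 : Matrix (Fin 2) (Fin 2) ℂ)) * Bmat‖)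
        ≤ 4/(3*‖lam‖^2) * (((Cq + 2*‖μ‖/t) * (‖q₁ t‖ + ‖q₂ t‖)) * (3/2 * ‖lam‖)) := by
          apply mul_le_mul (by rw [← norm_inv]; exact hDinv)
            (mul_le_mul hβ_le hTB (norm_nonneg _) (by positivity))
            (by positivity) (by positivity)
      _ = 2/‖lam‖ * ((Cq + 2*‖μ‖/t) * (‖q₁ t‖ + ‖q₂ t‖)) := by field_simp; ring
  -- the coefficient inequality
  have hx0 : (0:ℝ) < t * ‖lam‖ := by positivity
  have hfrac : 1/(t*‖lam‖) ≤ (2*‖μ‖)^(ν-1) * (t^(-ν) / ‖lam‖^ν) := by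
    have h3 : (t*‖lam‖)^(ν-1) ≤ (2*‖μ‖)^(ν-1) :=
      Real.rpow_le_rpow_of_nonpos (by positivity) htl (by linarith)
    have h5 : 1/(t*‖lam‖) = (t*‖lam‖)^(ν-1) * (t*‖lam‖)^(-ν) := by
      rw [← Real.rpow_add hx0]
      rw [show ν - 1 + -ν = -1 by ring, Real.rpow_neg_one, one_div]
    have h6 : (t*‖lam‖)^(-ν) = t^(-ν) / ‖lam‖^ν := by
      rw [Real.mul_rpow ht0.le hnl.le, Real.rpow_neg hnl.le, div_eq_mul_inv]
    rw [h5, h6]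
    exact mul_le_mul_of_nonneg_right h3 (by positivity)
  have hcoef : 2/(t*‖lam‖) + 2/‖lam‖*(Cq + 2*‖μ‖/t)
      ≤ C * (1/‖lam‖ + t^(-ν)/‖lam‖^ν) := by
    have e1 : 2/(t*‖lam‖) + 2/‖lam‖*(Cq + 2*‖μ‖/t)
        = 2*Cq*(1/‖lam‖) + (2+4*‖μ‖)*(1/(t*‖lam‖)) := by
      field_simp; ring
    have h1 : 2*Cq*(1/‖lam‖) ≤ C*(1/‖lam‖) :=
      mul_le_mul_of_nonneg_right (le_max_left _ _) (by positivity)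
    have h2 : (2+4*‖μ‖)*(1/(t*‖lam‖)) ≤ C*(t^(-ν)/‖lam‖^ν) := by
      calc (2+4*‖μ‖)*(1/(t*‖lam‖))
          ≤ (2+4*‖μ‖)*((2*‖μ‖)^(ν-1) * (t^(-ν)/‖lam‖^ν)) :=
            mul_le_mul_of_nonneg_left hfrac (by positivity)
        _ = ((2+4*‖μ‖)*(2*‖μ‖)^(ν-1)) * (t^(-ν)/‖lam‖^ν) := by ring
        _ ≤ C * (t^(-ν)/‖lam‖^ν) :=
            mul_le_mul_of_nonneg_right (le_max_right _ _) (by positivity)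
    rw [e1, mul_add]
    exact add_le_add h1 h2
  -- final assembly
  rw [hLm]
  have hQn : ‖Qm q₁ q₂ t‖ = ‖q₁ t‖ + ‖q₂ t‖ := norm_Qm q₁ q₂ t
  have hQn0 : (0:ℝ) ≤ ‖Qm q₁ q₂ t‖ := norm_nonneg _
  have step1 : ‖(G' * Qm q₁ q₂ t + G t * Q') + G t * S‖
      ≤ ‖G'‖ * ‖Qm q₁ q₂ t‖ + ‖G t‖ * ‖Q'‖ + ‖G t * S‖ := by
    calc ‖(G' * Qm q₁ q₂ t + G t * Q') + G t * S‖
        ≤ ‖G' * Qm q₁ q₂ t + G t * Q'‖ + ‖G t * S‖ := norm_add_le _ _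
      _ ≤ (‖G' * Qm q₁ q₂ t‖ + ‖G t * Q'‖) + ‖G t * S‖ := by
          exact add_le_add (norm_add_le _ _) le_rfl
      _ ≤ (‖G'‖ * ‖Qm q₁ q₂ t‖ + ‖G t‖ * ‖Q'‖) + ‖G t * S‖ :=
          add_le_add (add_le_add (norm_mul_le _ _) (norm_mul_le _ _)) le_rfl
  have step2 : ‖G'‖ * ‖Qm q₁ q₂ t‖ + ‖G t‖ * ‖Q'‖ + ‖G t * S‖
      ≤ 2/(t*‖lam‖) * ‖Qm q₁ q₂ t‖ + 2/‖lam‖ * ‖Q'‖ +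
        2/‖lam‖ * ((Cq + 2*‖μ‖/t) * ‖Qm q₁ q₂ t‖) := by
    refine add_le_add (add_le_add ?_ ?_) ?_
    · exact mul_le_mul_of_nonneg_right hG'_le hQn0
    · exact mul_le_mul_of_nonneg_right hGt_le (norm_nonneg _)
    · rw [hQn]; exact hGS_le
  have step3 : 2/(t*‖lam‖) * ‖Qm q₁ q₂ t‖ + 2/‖lam‖ * ‖Q'‖ +
        2/‖lam‖ * ((Cq + 2*‖μ‖/t) * ‖Qm q₁ q₂ t‖)
      ≤ 2/‖lam‖ * ‖Q'‖ + C * (1/‖lam‖ + t^(-ν)/‖lam‖^ν) * ‖Qm q₁ q₂ t‖ := by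
    have := mul_le_mul_of_nonneg_right hcoef hQn0
    nlinarith [this]
  linarith [step1, step2, step3]
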